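/- Let G be a finite group that is the product G = A·B where A is a subnormal supersolvable subgroup and B is a normal nilpotent subgroup. Then G is supersolvable. -/

import Mathlib

open Subgroup Pointwise

/-- `H` is a normal subgroup of `K` (both viewed as subgroups of the ambient group `G`). -/
def NormalIn {G : Type*} [Group G] (H K : Subgroup G) : Prop :=
  H ≤ K ∧ ∀ k ∈ K, ∀ h ∈ H, k * h * k⁻¹ ∈ H

/-- `H` is subnormal in `K`: there is a chain `H = c 0 ⊴ c 1 ⊴ ... ⊴ c n = K`. -/
def SubnormalIn {G : Type*} [Group G] (H K : Subgroup G) : Prop :=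
  ∃ (n : ℕ) (c : ℕ → Subgroup G), c 0 = H ∧ c n = K ∧ ∀ i < n, NormalIn (c i) (c (i + 1))

/-- The hypercenter: the limit of the upper central series. -/
def hypercenter (G : Type*) [Group G] : Subgroup G := ⨆ n, Subgroup.upperCentralSeries G n

/-- The nilpotent residual: the intersection of all normal subgroups with nilpotent quotient. -/
def nilpotentResidual (G : Type*) [Group G] : Subgroup G :=
  ⨅ N ∈ {N : Subgroup G |
    ∃ h : N.Normal, @Group.IsNilpotent (G ⧸ N) (@QuotientGroup.Quotient.group G _ N h)}, N

/-- The Fitting subgroup: the join of all normal nilpotent subgroups. -/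
def fitting (G : Type*) [Group G] : Subgroup G :=
  ⨆ N ∈ {N : Subgroup G | N.Normal ∧ Group.IsNilpotent N}, N

/-- `N` is a minimal normal subgroup. -/
def IsMinimalNormal {G : Type*} [Group G] (N : Subgroup G) : Prop :=
  N.Normal ∧ N ≠ ⊥ ∧ ∀ K : Subgroup G, K.Normal → K ≤ N → K = ⊥ ∨ K = N

/-- The socle: the join of all minimal normal subgroups. -/
def socle (G : Type*) [Group G] : Subgroup G :=
  ⨆ N ∈ {N : Subgroup G | IsMinimalNormal N}, N

/-- A group is supersolvable if it has a chain of normal subgroups with cyclic factors. -/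
def IsSupersolvable (G : Type*) [Group G] : Prop :=
  ∃ (n : ℕ) (c : ℕ → Subgroup G), c 0 = ⊥ ∧ c n = ⊤ ∧ (∀ i, (c i).Normal) ∧
    ∀ i < n, c i ≤ c (i + 1) ∧ ∃ g : G, c (i + 1) = c i ⊔ Subgroup.zpowers g

/-- A subgroup `H` is pronormal if `H` and each conjugate `H^g` are conjugate in their join. -/
def Pronormal {G : Type*} [Group G] (H : Subgroup G) : Prop :=
  ∀ g : G, ∃ x ∈ H ⊔ H.map (MulAut.conj g).toMonoidHom,
    H.map (MulAut.conj g).toMonoidHom = H.map (MulAut.conj x).toMonoidHom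

/-- A subgroup `H` is abnormal if `g ∈ ⟨H, H^g⟩` for all `g`. -/
def Abnormal {G : Type*} [Group G] (H : Subgroup G) : Prop :=
  ∀ g : G, g ∈ H ⊔ H.map (MulAut.conj g).toMonoidHom

/-- `Δ(G)`: the intersection of all abnormal maximal subgroups. -/
def abnormalDelta (G : Type*) [Group G] : Subgroup G :=
  ⨅ M ∈ {M : Subgroup G | IsCoatom M ∧ Abnormal M}, M

/-- The generalized Fitting subgroup `F̃(G)`: the preimage of `Soc(G/Φ(G))` in `G`. -/
def genFitting (G : Type*) [Group G] : Subgroup G :=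
  (socle (G ⧸ frattini G)).comap (QuotientGroup.mk' (frattini G))

/-- A group is `p`-decomposable if every `p`-element commutes with every `p'`-element. -/
def IsPDecomposable (p : ℕ) (K : Type*) [Group K] : Prop :=
  ∀ a b : K, (∃ n, orderOf a = p ^ n) → Nat.Coprime (orderOf b) p → Commute a b

section Aux
variable {G H : Type*} [Group G] [Group H]

theorem ss_of_surjective (f : G →* H) (hf : Function.Surjective f) :
    IsSupersolvable G → IsSupersolvable H := by
  rintro ⟨n, c, h0, hn, hnorm, hstep⟩
  refine ⟨n, fun i => (c i).map f, by simp [h0], ?_, fun i => (hnorm i).map f hf, ?_⟩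
  · show (c n).map f = ⊤
    rw [hn, ← MonoidHom.range_eq_map, MonoidHom.range_eq_top.mpr hf]
  · intro i hi
    obtain ⟨hle, g, hg⟩ := hstep i hi
    exact ⟨Subgroup.map_mono hle, f g, by
      show (c (i+1)).map f = (c i).map f ⊔ _
      rw [hg, Subgroup.map_sup, MonoidHom.map_zpowers]⟩

theorem ss_equiv (e : G ≃* H) : IsSupersolvable G → IsSupersolvable H :=
  ss_of_surjective e.toMonoidHom e.surjective

theorem ss_map (f : G →* H) (A : Subgroup G) :
    IsSupersolvable A → IsSupersolvable (A.map f) :=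
  ss_of_surjective (f.subgroupMap A) (f.subgroupMap_surjective A)

theorem ss_of_top (h : IsSupersolvable (⊤ : Subgroup G)) : IsSupersolvable G :=
  ss_equiv Subgroup.topEquiv h

theorem bot_normal' : (⊥ : Subgroup G).Normal := inferInstance

theorem card_quotient_lt [Finite G] (N : Subgroup G) [N.Normal] (hN : N ≠ ⊥) :
    Nat.card (G ⧸ N) < Nat.card G := by
  have h := Subgroup.card_eq_card_quotient_mul_card_subgroup N
  have h2 : 1 < Nat.card N := N.one_lt_card_iff_ne_bot.mpr hN
  have hq : 0 < Nat.card (G ⧸ N) := Nat.card_pos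
  calc Nat.card (G ⧸ N) = Nat.card (G ⧸ N) * 1 := (mul_one _).symm
    _ < Nat.card (G ⧸ N) * Nat.card N := by
      exact Nat.mul_lt_mul_of_le_of_lt le_rfl h2 hq
    _ = Nat.card G := h.symm

theorem ss_lift (N : Subgroup G) [hN : N.Normal] (z : G) (hz : N = Subgroup.zpowers z)
    (h : IsSupersolvable (G ⧸ N)) : IsSupersolvable G := by
  obtain ⟨n, c, h0, hn, hnorm, hstep⟩ := h
  set π := QuotientGroup.mk' N with hπ
  have hπs : Function.Surjective π := QuotientGroup.mk_surjective
  refine ⟨n + 1, fun i => Nat.rec ⊥ (fun j _ => (c j).comap π) i, rfl, ?_, ?_, ?_⟩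
  · show (c n).comap π = ⊤
    rw [hn, Subgroup.comap_top]
  · intro i
    cases i with
    | zero => exact bot_normal'
    | succ j => exact (hnorm j).comap π
  · intro i hi
    cases i with
    | zero =>
      constructor
      · exact bot_le
      · refine ⟨z, ?_⟩
        show (c 0).comap π = ⊥ ⊔ Subgroup.zpowers z
        rw [h0, bot_sup_eq, MonoidHom.comap_bot, ← hz, hπ, QuotientGroup.ker_mk']
    | succ j =>
      have hj : j < n := by omega
      obtain ⟨hle, g, hg⟩ := hstep j hj
      obtain ⟨g', hg'⟩ := hπs g
      constructor
      · exact Subgroup.comap_mono hle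
      · refine ⟨g', ?_⟩
        show (c (j+1)).comap π = (c j).comap π ⊔ Subgroup.zpowers g'
        have hker : π.ker ≤ (c j).comap π ⊔ Subgroup.zpowers g' := by
          intro x hx
          refine Subgroup.mem_sup_left ?_
          simp only [Subgroup.mem_comap]
          rw [show π x = 1 from hx]
          exact (c j).one_mem
        have heq : c (j+1) = ((c j).comap π ⊔ Subgroup.zpowers g').map π := by
          rw [hg, Subgroup.map_sup, MonoidHom.map_zpowers, hg',
            Subgroup.map_comap_eq_self_of_surjective hπs]
        rw [heq, Subgroup.comap_map_eq, sup_eq_left.mpr hker]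

theorem exists_central_ne_one [Group.IsNilpotent G] [Nontrivial G] :
    ∃ z : G, z ≠ 1 ∧ z ∈ Subgroup.center G := by
  by_contra hc
  push_neg at hc
  have hbot : Subgroup.center G = ⊥ := by
    rw [Subgroup.eq_bot_iff_forall]
    intro x hx
    by_contra hx1
    exact (hc x hx1) hx
  have hall : ∀ n, Subgroup.upperCentralSeries G n = ⊥ := by
    intro n
    induction n with
    | zero => rfl
    | succ m ihm =>
      rw [Subgroup.eq_bot_iff_forall]
      intro x hx
      have hx' := Subgroup.mem_upperCentralSeries_succ_iff.mp hx
      have hxc : x ∈ Subgroup.center G := by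
        rw [Subgroup.mem_center_iff]
        intro g
        have := hx' g
        rw [ihm, Subgroup.mem_bot] at this
        have h2 : x * g = g * x :=
          calc x * g = (x * g * x⁻¹ * g⁻¹) * (g * x) := by group
            _ = 1 * (g * x) := by rw [← commutatorElement_def, this]
            _ = g * x := one_mul _
        exact h2.symm
      rw [hbot, Subgroup.mem_bot] at hxc
      exact hxc
  obtain ⟨n, hn⟩ := Group.IsNilpotent.nilpotent (G := G)
  rw [hall n] at hn
  exact absurd hn bot_ne_top

end Aux

universe u

theorem ss_of_nilpotent_aux : ∀ (k : ℕ) (G : Type u) [Group G] [Finite G], Nat.card G ≤ k →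
    ∀ [Group.IsNilpotent G], IsSupersolvable G := by
  intro k
  induction k using Nat.strong_induction_on with
  | _ k ih =>
    intro G _ _ hcard _
    by_cases htriv : Subsingleton G
    · exact ⟨0, fun _ => ⊥, rfl, Subsingleton.elim _ _, fun _ => bot_normal',
        fun i hi => absurd hi (Nat.not_lt_zero i)⟩
    · have : Nontrivial G := not_subsingleton_iff_nontrivial.mp htriv
      obtain ⟨z, hz1, hzc⟩ := exists_central_ne_one (G := G)
      set Z := Subgroup.zpowers z with hZ
      have hZn : Z.Normal := by
        constructor
        intro x hx g
        rwa [Subgroup.mem_center_iff.mp (Subgroup.zpowers_le.mpr hzc hx) g, mul_assoc,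
          mul_inv_cancel, mul_one]
      have hZbot : Z ≠ ⊥ := by
        intro h
        exact hz1 (Subgroup.mem_bot.mp (h ▸ Subgroup.mem_zpowers z))
      have hlt : Nat.card (G ⧸ Z) < Nat.card G := card_quotient_lt Z hZbot
      have hq : IsSupersolvable (G ⧸ Z) :=
        ih (Nat.card (G ⧸ Z)) (lt_of_lt_of_le hlt hcard) (G ⧸ Z) le_rfl
      exact ss_lift Z z rfl hq

theorem ss_of_nilpotent (G : Type u) [Group G] [Finite G] [Group.IsNilpotent G] :
    IsSupersolvable G :=
  ss_of_nilpotent_aux (Nat.card G) G le_rfl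

section Aux2
variable {G : Type*} [Group G]

theorem commute_of_normal_disjoint {A N : Subgroup G} (hA : A.Normal) (hN : N.Normal)
    (h : N ⊓ A = ⊥) : ∀ n ∈ N, ∀ a ∈ A, n * a = a * n := by
  intro n hn a ha
  have hc : n * a * n⁻¹ * a⁻¹ ∈ N ⊓ A := by
    constructor
    · have : a * n⁻¹ * a⁻¹ ∈ N := hN.conj_mem n⁻¹ (N.inv_mem hn) a
      have := N.mul_mem hn this
      simpa [mul_assoc] using this
    · have : n * a * n⁻¹ ∈ A := hA.conj_mem a ha n
      exact A.mul_mem this (A.inv_mem ha)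
  rw [h, Subgroup.mem_bot] at hc
  calc n * a = (n * a * n⁻¹ * a⁻¹) * (a * n) := by group
    _ = 1 * (a * n) := by rw [hc]
    _ = a * n := one_mul _

theorem exists_minimal_normal_le [Finite G] {C : Subgroup G} (hC : C.Normal) (hCbot : C ≠ ⊥) :
    ∃ N : Subgroup G, N.Normal ∧ N ≠ ⊥ ∧ N ≤ C ∧
      ∀ K : Subgroup G, K.Normal → K ≤ N → K = ⊥ ∨ K = N := by
  classical
  let S : Set ℕ := {m | ∃ N : Subgroup G, N.Normal ∧ N ≠ ⊥ ∧ N ≤ C ∧ Nat.card N = m}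
  have hS : S.Nonempty := ⟨Nat.card C, C, hC, hCbot, le_rfl, rfl⟩
  obtain ⟨N, hNn, hNb, hNC, hNm⟩ := Nat.sInf_mem hS
  refine ⟨N, hNn, hNb, hNC, ?_⟩
  intro K hKn hKN
  by_cases hKb : K = ⊥
  · exact Or.inl hKb
  · refine Or.inr (Subgroup.eq_of_le_of_card_ge hKN ?_)
    have h1 : Nat.card K ∈ S := ⟨K, hKn, hKb, hKN.trans hNC, rfl⟩
    have h2 : sInf S ≤ Nat.card K := Nat.sInf_le h1
    omega

end Aux2

section Aux3
variable {G : Type*} [Group G]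

instance zpowers_isCyclic (g : G) : IsCyclic (Subgroup.zpowers g) := by
  refine ⟨⟨⟨g, Subgroup.mem_zpowers g⟩, fun x => ?_⟩⟩
  obtain ⟨k, hk⟩ := x.2
  refine ⟨k, Subtype.ext ?_⟩
  simpa using hk

theorem exists_zpowers_eq (N : Subgroup G) [IsCyclic N] : ∃ z : G, N = Subgroup.zpowers z := by
  obtain ⟨g, hg⟩ := IsCyclic.exists_generator (α := N)
  refine ⟨(g : G), le_antisymm ?_ (Subgroup.zpowers_le.mpr g.2)⟩
  intro x hx
  obtain ⟨k, hk⟩ := hg ⟨x, hx⟩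
  refine ⟨k, ?_⟩
  have := congrArg Subtype.val hk
  simpa using this

/-- If a subgroup `N ≤ A` injects (via inclusion then quotient) between consecutive terms
of a cyclic-factor chain, it is cyclic. This extracts cyclicity of a minimal normal
subgroup contained in a supersolvable normal subgroup. -/
theorem crux_cyclic {A N : Subgroup G} (hNA : N ≤ A)
    (c : ℕ → Subgroup A) (j : ℕ) (hnormj : (c j).Normal) (g : A)
    (hstep : c (j + 1) = c j ⊔ Subgroup.zpowers g)
    (hbot : N ⊓ (c j).map A.subtype = ⊥)
    (hle : N ≤ (c (j + 1)).map A.subtype) :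
    ∃ z : G, N = Subgroup.zpowers z := by
  haveI := hnormj
  set π := QuotientGroup.mk' (c j) with hπ
  set N' := N.subgroupOf A with hN'
  let φ : N' →* A ⧸ (c j) := π.comp N'.subtype
  have hinj : Function.Injective φ := by
    intro x y hxy
    have : (x : A) * (y : A)⁻¹ ∈ (c j) := by
      have h1 : π ((x : A) * (y : A)⁻¹) = 1 := by
        simp only [map_mul, map_inv]
        change φ x * (φ y)⁻¹ = 1
        rw [hxy, mul_inv_cancel]
      rwa [← QuotientGroup.ker_mk' (c j), MonoidHom.mem_ker]
    have hmem : ((x : A) : G) * (((y : A) : G))⁻¹ ∈ N ⊓ (c j).map A.subtype := by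
      constructor
      · exact N.mul_mem (x.2) (N.inv_mem y.2)
      · exact ⟨(x : A) * (y : A)⁻¹, this, rfl⟩
    rw [hbot, Subgroup.mem_bot] at hmem
    have : ((x : A) : G) = ((y : A) : G) := by
      have := mul_inv_eq_one.mp hmem
      exact this
    exact Subtype.ext (Subtype.ext this)
  have hrange : φ.range ≤ Subgroup.zpowers (π g) := by
    rintro q ⟨x, rfl⟩
    have hx' : (x : A) ∈ c (j + 1) := by
      have hmem : ((x : A) : G) ∈ (c (j + 1)).map A.subtype := hle x.2
      obtain ⟨y, hy, hyx⟩ := hmem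
      have : y = (x : A) := Subtype.ext hyx
      rwa [← this]
    rw [hstep] at hx'
    have : π (x : A) ∈ (c j ⊔ Subgroup.zpowers g).map π := ⟨(x : A), hx', rfl⟩
    rw [Subgroup.map_sup, MonoidHom.map_zpowers] at this
    have hker : (c j).map π = ⊥ := by
      rw [hπ]
      ext q
      simp only [Subgroup.mem_map, Subgroup.mem_bot]
      constructor
      · rintro ⟨y, hy, rfl⟩
        simpa using (QuotientGroup.eq_one_iff y).mpr hy
      · rintro rfl
        exact ⟨1, (c j).one_mem, map_one _⟩
    rw [hker, bot_sup_eq] at this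
    exact this
  have hcyc : IsCyclic φ.range := Subgroup.isCyclic_of_le hrange
  have hcycN' : IsCyclic N' := isCyclic_of_surjective (MonoidHom.ofInjective hinj).symm
    (MulEquiv.surjective _)
  have hcycN : IsCyclic N := isCyclic_of_surjective (Subgroup.subgroupOfEquivOfLe hNA)
    (MulEquiv.surjective _)
  exact exists_zpowers_eq N

end Aux3

theorem lemP : ∀ (k : ℕ) (G : Type u) [Group G] [Finite G], Nat.card G ≤ k →
    ∀ (A B : Subgroup G), A.Normal → IsSupersolvable A → B.Normal → Group.IsNilpotent B →
    (A : Set G) * (B : Set G) = Set.univ → IsSupersolvable G := by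
  intro k
  induction k using Nat.strong_induction_on with
  | _ k ih =>
  intro G _ _ hcard A B hAn hAs hBn hBnil hprod
  haveI := hBnil
  by_cases hB : B = ⊥
  · have hA : A = ⊤ := by
      rw [eq_top_iff]
      intro g _
      have hg : g ∈ (A : Set G) * (B : Set G) := hprod ▸ Set.mem_univ g
      obtain ⟨a, ha, b, hb, rfl⟩ := hg
      have hb1 : b = 1 := by rw [hB] at hb; exact hb
      show a * b ∈ A
      rw [hb1, mul_one]
      exact ha
    rw [hA] at hAs
    exact ss_of_top hAs
  · haveI : Nontrivial B := (Subgroup.nontrivial_iff_ne_bot B).mpr hB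
    obtain ⟨b₀, hb₀1, hb₀c⟩ := exists_central_ne_one (G := B)
    set C := Subgroup.centralizer (B : Set G) ⊓ B with hC
    have hCbot : C ≠ ⊥ := by
      intro h
      have hmem : (b₀ : G) ∈ C := by
        refine Subgroup.mem_inf.mpr ⟨Subgroup.mem_centralizer_iff.mpr ?_, b₀.2⟩
        intro h' hh'
        have h2 := Subgroup.mem_center_iff.mp hb₀c ⟨h', hh'⟩
        exact congrArg Subtype.val h2
      rw [h, Subgroup.mem_bot] at hmem
      exact hb₀1 (Subtype.ext hmem)
    have hCn : C.Normal := by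
      constructor
      intro n hn g
      obtain ⟨hn1, hn2⟩ := Subgroup.mem_inf.mp hn
      refine Subgroup.mem_inf.mpr ⟨Subgroup.mem_centralizer_iff.mpr ?_, hBn.conj_mem n hn2 g⟩
      intro x hx
      have hx' : g⁻¹ * x * g ∈ B := by
        have := hBn.conj_mem x hx g⁻¹
        simpa using this
      have hcm := Subgroup.mem_centralizer_iff.mp hn1 _ hx'
      calc x * (g * n * g⁻¹) = g * ((g⁻¹ * x * g) * n) * g⁻¹ := by group
        _ = g * (n * (g⁻¹ * x * g)) * g⁻¹ := by rw [hcm]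
        _ = (g * n * g⁻¹) * x := by group
    obtain ⟨N, hNn, hNbot, hNC, hNmin⟩ := exists_minimal_normal_le hCn hCbot
    have hNcomm : ∀ n ∈ N, ∀ b ∈ B, n * b = b * n := by
      intro n hn b hb
      exact (Subgroup.mem_centralizer_iff.mp (Subgroup.mem_inf.mp (hNC hn)).1 b hb).symm
    have hZ : ∃ (Z : Subgroup G) (z : G), Z.Normal ∧ Z ≠ ⊥ ∧ Z = Subgroup.zpowers z := by
      by_cases hNA : N ⊓ A = ⊥
      · have hNcent : ∀ n ∈ N, ∀ g : G, n * g = g * n := by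
          intro n hn g
          have hg : g ∈ (A : Set G) * (B : Set G) := hprod ▸ Set.mem_univ g
          obtain ⟨a, ha, b, hb, rfl⟩ := hg
          have h1 : n * a = a * n := commute_of_normal_disjoint hAn hNn hNA n hn a ha
          have h2 : n * b = b * n := hNcomm n hn b hb
          calc n * (a * b) = (n * a) * b := by rw [mul_assoc]
            _ = a * (n * b) := by rw [h1, mul_assoc]
            _ = (a * b) * n := by rw [h2, ← mul_assoc]
        obtain ⟨z, hzN, hz1⟩ : ∃ z ∈ N, z ≠ 1 := by
          by_contra hcon
          push_neg at hcon
          exact hNbot ((Subgroup.eq_bot_iff_forall N).mpr hcon)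
        refine ⟨Subgroup.zpowers z, z, ?_, ?_, rfl⟩
        · constructor
          intro x hx g
          have hxN : x ∈ N := Subgroup.zpowers_le.mpr hzN hx
          have : g * x * g⁻¹ = x := by
            rw [← hNcent x hxN g]
            group
          rwa [this]
        · intro h
          exact hz1 (Subgroup.mem_bot.mp (h ▸ Subgroup.mem_zpowers z))
      · have hNAnormal : (N ⊓ A).Normal :=
          ⟨fun x hx g => ⟨hNn.conj_mem x hx.1 g, hAn.conj_mem x hx.2 g⟩⟩
        have hNAeq : N ⊓ A = N := (hNmin _ hNAnormal inf_le_left).resolve_left hNA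
        have hNA' : N ≤ A := by rw [← hNAeq]; exact inf_le_right
        have hGinv : ∀ K : Subgroup G, K ≤ N →
            (∀ a ∈ A, ∀ x ∈ K, a * x * a⁻¹ ∈ K) → K.Normal := by
          intro K hKN hKinv
          constructor
          intro x hx g
          have hg : g ∈ (A : Set G) * (B : Set G) := hprod ▸ Set.mem_univ g
          obtain ⟨a, ha, b, hb, rfl⟩ := hg
          have hbx : b * x * b⁻¹ = x := by
            rw [← hNcomm x (hKN hx) b hb]
            group
          have hrw : (a * b) * x * (a * b)⁻¹ = a * (b * x * b⁻¹) * a⁻¹ := by group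
          rw [hrw, hbx]
          exact hKinv a ha x hx
        obtain ⟨m, c, hc0, hcm, hcnorm, hcstep⟩ := hAs
        set Ai : ℕ → Subgroup G := fun i => (c i).map A.subtype with hAi
        set K : ℕ → Subgroup G := fun i => N ⊓ Ai i with hKdef
        have hKdich : ∀ i, K i = ⊥ ∨ K i = N := by
          intro i
          refine hNmin (K i) (hGinv (K i) inf_le_left ?_) inf_le_left
          intro a ha x hx
          refine ⟨hNn.conj_mem x hx.1 a, ?_⟩
          obtain ⟨y, hy, hyx⟩ := hx.2
          refine ⟨⟨a, ha⟩ * y * ⟨a, ha⟩⁻¹, (hcnorm i).conj_mem y hy ⟨a, ha⟩, ?_⟩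
          simp [← hyx]
        have hK0 : K 0 = ⊥ := by
          show N ⊓ (c 0).map A.subtype = ⊥
          rw [hc0, Subgroup.map_bot]
          exact inf_bot_eq N
        have hAm : Ai m = A := by
          rw [hAi]
          simp only [hcm]
          refine le_antisymm ?_ ?_
          · rintro x ⟨y, -, rfl⟩
            exact y.2
          · intro x hx
            exact ⟨⟨x, hx⟩, trivial, rfl⟩
        have hKm : K m = N := by
          rw [hKdef]
          simp only [hAm]
          exact hNAeq
        have hex : ∃ i, K i ≠ ⊥ := ⟨m, hKm ▸ hNbot⟩
        classical
        have hj₀ : K (Nat.find hex) ≠ ⊥ := Nat.find_spec hex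
        have hj₀pos : Nat.find hex ≠ 0 := fun h => hj₀ (by rw [h, hK0])
        obtain ⟨j, hj⟩ : ∃ j, Nat.find hex = j + 1 := ⟨Nat.find hex - 1, by omega⟩
        have hKj : K j = ⊥ := by
          by_contra h
          have h2 : Nat.find hex ≤ j := Nat.find_le h
          omega
        have hKj1 : K (j + 1) = N := by
          rw [hj] at hj₀
          exact (hKdich (j + 1)).resolve_left hj₀
        have hjm : Nat.find hex ≤ m := Nat.find_le (hKm ▸ hNbot)
        have hjm' : j < m := by omega
        obtain ⟨hle', g, hg⟩ := hcstep j hjm'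
        have hNle : N ≤ Ai (j + 1) := by
          rw [← hKj1]
          exact inf_le_right
        obtain ⟨z, hz⟩ := crux_cyclic hNA' c j (hcnorm j) g hg hKj hNle
        exact ⟨N, z, hNn, hNbot, hz⟩
    obtain ⟨Z, z, hZn, hZbot, hZz⟩ := hZ
    haveI := hZn
    set π := QuotientGroup.mk' Z with hπ
    have hπs : Function.Surjective π := QuotientGroup.mk_surjective
    have hlt : Nat.card (G ⧸ Z) < Nat.card G := card_quotient_lt Z hZbot
    have hssq : IsSupersolvable (G ⧸ Z) := by
      refine ih (Nat.card (G ⧸ Z)) (lt_of_lt_of_le hlt hcard) (G ⧸ Z) le_rfl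
        (A.map π) (B.map π) (hAn.map π hπs) (ss_map π A hAs) (hBn.map π hπs)
        (nilpotent_of_surjective (π.subgroupMap B) (π.subgroupMap_surjective B)) ?_
      rw [Set.eq_univ_iff_forall]
      intro q
      obtain ⟨g, rfl⟩ := hπs q
      have hg : g ∈ (A : Set G) * (B : Set G) := hprod ▸ Set.mem_univ g
      obtain ⟨a, ha, b, hb, rfl⟩ := hg
      exact ⟨π a, ⟨a, ha, rfl⟩, π b, ⟨b, hb, rfl⟩, (map_mul π a b).symm⟩
    exact ss_lift Z z hZz hssq

theorem mainAux : ∀ (n : ℕ) (G : Type u) [Group G] [Finite G] (A B : Subgroup G)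
    (c : ℕ → Subgroup G), c 0 = A → c n = ⊤ → (∀ i < n, NormalIn (c i) (c (i + 1))) →
    IsSupersolvable A → B.Normal → Group.IsNilpotent B →
    (A : Set G) * (B : Set G) = Set.univ → IsSupersolvable G := by
  intro n
  induction n with
  | zero =>
    intro G _ _ A B c hc0 hcn _ hAs _ _ _
    have hA : A = ⊤ := hc0 ▸ hcn
    rw [hA] at hAs
    exact ss_of_top hAs
  | succ n ihn =>
    intro G _ _ A B c hc0 hcn hchain hAs hBn hBnil hprod
    haveI := hBnil
    set M := c n with hM
    have hMn : M.Normal := by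
      obtain ⟨hle, hconj⟩ := hchain n (Nat.lt_succ_self n)
      constructor
      intro x hx g
      exact hconj g (by rw [hcn]; trivial) x hx
    have hmono : ∀ j ≤ n, ∀ i ≤ j, c i ≤ c j := by
      intro j hj
      induction j with
      | zero =>
        intro i hi
        have : i = 0 := by omega
        subst this
        exact le_rfl
      | succ j ihj =>
        intro i hi
        rcases Nat.lt_or_ge i (j + 1) with h | h
        · exact (ihj (by omega) i (by omega)).trans (hchain j (by omega)).1
        · have : i = j + 1 := by omega
          subst this
          exact le_rfl
    have hAleM : A ≤ M := hc0 ▸ hmono n le_rfl 0 (Nat.zero_le n)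
    have hssM : IsSupersolvable M := by
      refine ihn M (A.subgroupOf M) ((B ⊓ M).subgroupOf M)
        (fun i => (c i).subgroupOf M)
        (show (c 0).subgroupOf M = A.subgroupOf M by rw [hc0])
        (show (c n).subgroupOf M = ⊤ from Subgroup.subgroupOf_self _) ?_ ?_ ?_ ?_ ?_
      · intro i hi
        obtain ⟨hle, hconj⟩ := hchain i (by omega)
        constructor
        · intro x hx
          rw [Subgroup.mem_subgroupOf] at hx ⊢
          exact hle hx
        · intro k hk h hh
          rw [Subgroup.mem_subgroupOf] at hk hh ⊢
          exact hconj (k : G) hk (h : G) hh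
      · exact ss_equiv (Subgroup.subgroupOfEquivOfLe hAleM).symm hAs
      · constructor
        intro x hx g
        rw [Subgroup.mem_subgroupOf] at hx ⊢
        refine ⟨?_, M.mul_mem (M.mul_mem g.2 hx.2) (M.inv_mem g.2)⟩
        exact hBn.conj_mem (x : G) hx.1 (g : G)
      · have e2 := Subgroup.subgroupOfEquivOfLe (inf_le_left : B ⊓ M ≤ B)
        have e1 := Subgroup.subgroupOfEquivOfLe (inf_le_right : B ⊓ M ≤ M)
        haveI : Group.IsNilpotent ((B ⊓ M).subgroupOf B) := Subgroup.isNilpotent _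
        have h2 : Group.IsNilpotent (B ⊓ M : Subgroup G) :=
          nilpotent_of_surjective e2.toMonoidHom e2.surjective
        exact nilpotent_of_surjective e1.symm.toMonoidHom e1.symm.surjective
      · rw [Set.eq_univ_iff_forall]
        intro x
        have hg : (x : G) ∈ (A : Set G) * (B : Set G) := hprod ▸ Set.mem_univ _
        obtain ⟨a, ha, b, hb, hab⟩ := hg
        have haM : a ∈ M := hAleM ha
        have hbM : b ∈ M := by
          have : b = a⁻¹ * (x : G) := by rw [← hab]; group
          rw [this]
          exact M.mul_mem (M.inv_mem haM) x.2
        refine ⟨⟨a, haM⟩, ?_, ⟨b, hbM⟩, ?_, ?_⟩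
        · rw [SetLike.mem_coe, Subgroup.mem_subgroupOf]; exact ha
        · rw [SetLike.mem_coe, Subgroup.mem_subgroupOf]; exact ⟨hb, hbM⟩
        · exact Subtype.ext hab
    refine lemP (Nat.card G) G le_rfl M B hMn hssM hBn hBnil ?_
    rw [Set.eq_univ_iff_forall]
    intro g
    have hg : g ∈ (A : Set G) * (B : Set G) := hprod ▸ Set.mem_univ g
    obtain ⟨a, ha, b, hb, hab⟩ := hg
    exact ⟨a, hAleM ha, b, hb, hab⟩

theorem isSupersolvable_of_product_subnormal_supersolvable_normal_nilpotent
    {G : Type*} [Group G] [Finite G] (A B : Subgroup G)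
    (hA : SubnormalIn A ⊤) (hAs : IsSupersolvable A)
    (hB : B.Normal) (hBnil : Group.IsNilpotent B)
    (hprod : (A : Set G) * (B : Set G) = Set.univ) :
    IsSupersolvable G := by
  obtain ⟨n, c, hc0, hcn, hchain⟩ := hA
  exact mainAux n G A B c hc0 hcn hchain hAs hB hBnil hprod
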